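/- Avoiding unnecessary branchings (Rule 6) correctness: Let S be a finite collection of finite sets with universe U in which all subset and subsumption reductions have been applied (no set is contained in another, and no two distinct elements e, e' satisfy S(e') ⊆ S(e)). Let S ∈ S, let R = {e ∈ S : f(e) = 2} with r₂ = |R|, and let M = (⋃_{e ∈ R} ⋃_{T ∈ S(e), T ≠ S} T) \ S with m = |M|. If m < r₂, then there exists a minimum set cover of S containing S. -/

import Mathlib

/-- Rule 6 (avoiding unnecessary branchings) correctness: in a subset- and
subsumption-reduced instance, if the set `M` of new elements in the second-occurrence
sets of the frequency-two elements `R` of `S₀` satisfies `|M| < |R|`, then some minimum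
set cover contains `S₀`. -/
theorem stmt_5 {α : Type*} [DecidableEq α] (S : Finset (Finset α)) (S₀ : Finset α)
    (hS₀ : S₀ ∈ S)
    (hnosub : ∀ T₁ ∈ S, ∀ T₂ ∈ S, T₁ ⊆ T₂ → T₁ = T₂)
    (hnosubsumption : ∀ e ∈ S.biUnion id, ∀ e' ∈ S.biUnion id, e ≠ e' →
      ¬ (S.filter (fun T => e' ∈ T) ⊆ S.filter (fun T => e ∈ T)))
    (R M : Finset α)
    (hR : R = S₀.filter (fun e => (S.filter (fun T => e ∈ T)).card = 2))
    (hM : M = (R.biUnion (fun e => (S.filter (fun T => e ∈ T ∧ T ≠ S₀)).biUnion id)) \ S₀)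
    (hlt : M.card < R.card) :
    ∃ C ⊆ S, C.biUnion id = S.biUnion id ∧ S₀ ∈ C ∧
      ∀ C' ⊆ S, C'.biUnion id = S.biUnion id → C.card ≤ C'.card := by
  classical
  set U := S.biUnion id with hU
  -- a minimum cover exists
  have hScov : S ∈ S.powerset.filter (fun C => C.biUnion id = U) := by
    simp [Finset.mem_filter, Finset.mem_powerset, hU]
  obtain ⟨C, hCmem, hCmin⟩ := Finset.exists_min_image
    (S.powerset.filter (fun C => C.biUnion id = U)) Finset.card ⟨S, hScov⟩
  rw [Finset.mem_filter, Finset.mem_powerset] at hCmem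
  obtain ⟨hCsub, hCcov⟩ := hCmem
  have hCmin' : ∀ C' ⊆ S, C'.biUnion id = U → C.card ≤ C'.card := by
    intro C' h1 h2
    exact hCmin C' (by rw [Finset.mem_filter, Finset.mem_powerset]; exact ⟨h1, h2⟩)
  by_cases hmem : S₀ ∈ C
  · exact ⟨C, hCsub, hCcov, hmem, hCmin'⟩
  -- S₀ ∉ C : construct a better cover
  have hcover : ∀ x ∈ U, ∃ B ∈ C, x ∈ B := by
    intro x hx
    rw [← hCcov] at hx
    simpa using Finset.mem_biUnion.mp hx
  have hUmem : ∀ x ∈ U, ∃ B ∈ S, x ∈ B := by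
    intro x hx
    simpa using Finset.mem_biUnion.mp hx
  -- g e : the set of C covering e
  let g : α → Finset α := fun e => if h : ∃ B ∈ C, e ∈ B then h.choose else ∅
  have hg : ∀ e ∈ U, g e ∈ C ∧ e ∈ g e := by
    intro e he
    have h := hcover e he
    simp only [g, dif_pos h]
    exact ⟨h.choose_spec.1, h.choose_spec.2⟩
  -- a x : any set of S containing x
  let a : α → Finset α := fun x => if h : ∃ B ∈ S, x ∈ B then h.choose else ∅
  have ha : ∀ x ∈ U, a x ∈ S ∧ x ∈ a x := by
    intro x hx
    have h := hUmem x hx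
    simp only [a, dif_pos h]
    exact ⟨h.choose_spec.1, h.choose_spec.2⟩
  have hRS₀ : ∀ e ∈ R, e ∈ S₀ := by
    intro e he; rw [hR, Finset.mem_filter] at he; exact he.1
  have hRU : ∀ e ∈ R, e ∈ U := by
    intro e he
    exact Finset.mem_biUnion.mpr ⟨S₀, hS₀, hRS₀ e he⟩
  have hgne : ∀ e ∈ R, g e ≠ S₀ := by
    intro e he h
    exact hmem (h ▸ (hg e (hRU e he)).1)
  -- filter structure for e ∈ R
  have hfe : ∀ e ∈ R, S.filter (fun T => e ∈ T) = {S₀, g e} := by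
    intro e he
    have heS₀ := hRS₀ e he
    have hcard : (S.filter (fun T => e ∈ T)).card = 2 := by
      rw [hR, Finset.mem_filter] at he; exact he.2
    have hgU := hg e (hRU e he)
    have hne : S₀ ≠ g e := fun h => hgne e he h.symm
    have hsub : ({S₀, g e} : Finset (Finset α)) ⊆ S.filter (fun T => e ∈ T) := by
      intro T hT
      rcases Finset.mem_insert.mp hT with rfl | hT
      · exact Finset.mem_filter.mpr ⟨hS₀, heS₀⟩
      · rw [Finset.mem_singleton] at hT
        subst hT
        exact Finset.mem_filter.mpr ⟨hCsub hgU.1, hgU.2⟩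
    refine (Finset.eq_of_subset_of_card_le hsub ?_).symm
    rw [hcard, Finset.card_insert_of_notMem (by simp [hne]), Finset.card_singleton]
  have hginj : Set.InjOn g ↑R := by
    intro e he e' he' heq
    by_contra hne
    apply hnosubsumption e (hRU e he) e' (hRU e' he') hne
    rw [hfe e he, hfe e' he', heq]
  have hMU : M ⊆ U := by
    intro x hx
    rw [hM, Finset.mem_sdiff] at hx
    obtain ⟨e, he, hx⟩ := Finset.mem_biUnion.mp hx.1
    obtain ⟨T, hT, hxT⟩ := Finset.mem_biUnion.mp hx
    exact Finset.mem_biUnion.mpr ⟨T, (Finset.mem_filter.mp hT).1, hxT⟩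
  -- elements of g e outside S₀ are in M
  have hgeM : ∀ e ∈ R, ∀ b ∈ g e, b ∉ S₀ → b ∈ M := by
    intro e he b hb hbS₀
    rw [hM, Finset.mem_sdiff]
    refine ⟨Finset.mem_biUnion.mpr ⟨e, he, ?_⟩, hbS₀⟩
    refine Finset.mem_biUnion.mpr ⟨g e, ?_, hb⟩
    exact Finset.mem_filter.mpr ⟨hCsub (hg e (hRU e he)).1, (hg e (hRU e he)).2, hgne e he⟩
  set C'' := (C \ R.image g) ∪ insert S₀ (M.image a) with hC''
  have hC''sub : C'' ⊆ S := by
    intro B hB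
    rcases Finset.mem_union.mp hB with hB | hB
    · exact hCsub (Finset.mem_sdiff.mp hB).1
    · rcases Finset.mem_insert.mp hB with rfl | hB
      · exact hS₀
      · obtain ⟨x, hx, rfl⟩ := Finset.mem_image.mp hB
        exact (ha x (hMU hx)).1
  have hC''cov : C''.biUnion id = U := by
    apply Finset.Subset.antisymm
    · intro x hx
      obtain ⟨B, hB, hxB⟩ := Finset.mem_biUnion.mp hx
      exact Finset.mem_biUnion.mpr ⟨B, hC''sub hB, hxB⟩
    · intro x hx
      obtain ⟨B, hB, hxB⟩ := hcover x hx
      by_cases hBg : B ∈ R.image g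
      · obtain ⟨e, he, rfl⟩ := Finset.mem_image.mp hBg
        by_cases hxS₀ : x ∈ S₀
        · exact Finset.mem_biUnion.mpr ⟨S₀,
            Finset.mem_union_right _ (Finset.mem_insert_self _ _), hxS₀⟩
        · have hxM := hgeM e he x hxB hxS₀
          refine Finset.mem_biUnion.mpr ⟨a x, Finset.mem_union_right _
            (Finset.mem_insert_of_mem (Finset.mem_image_of_mem a hxM)), (ha x hx).2⟩
      · exact Finset.mem_biUnion.mpr ⟨B,
          Finset.mem_union_left _ (Finset.mem_sdiff.mpr ⟨hB, hBg⟩), hxB⟩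
  have himgsub : R.image g ⊆ C := by
    intro B hB
    obtain ⟨e, he, rfl⟩ := Finset.mem_image.mp hB
    exact (hg e (hRU e he)).1
  have himgcard : (R.image g).card = R.card := Finset.card_image_of_injOn hginj
  have hcard1 : (C \ R.image g).card = C.card - R.card := by
    rw [Finset.card_sdiff_of_subset himgsub, himgcard]
  have hRC : R.card ≤ C.card := himgcard ▸ Finset.card_le_card himgsub
  have hcard2 : (insert S₀ (M.image a)).card ≤ M.card + 1 := by
    calc (insert S₀ (M.image a)).card ≤ (M.image a).card + 1 := Finset.card_insert_le _ _
    _ ≤ M.card + 1 := by have := Finset.card_image_le (s := M) (f := a); omega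
  have hC''card : C''.card ≤ C.card := by
    calc C''.card ≤ (C \ R.image g).card + (insert S₀ (M.image a)).card :=
      Finset.card_union_le _ _
    _ ≤ (C.card - R.card) + (M.card + 1) := by rw [hcard1]; omega
    _ ≤ C.card := by omega
  refine ⟨C'', hC''sub, hC''cov, Finset.mem_union_right _ (Finset.mem_insert_self _ _),
    fun C' h1 h2 => le_trans hC''card (hCmin' C' h1 h2)⟩
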